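/- Let G be a finite simple graph with maximum degree Δ and let v_i be a vertex of degree d_i ≥ 1 that is not contained in any quadrangle (cycle of length 4) of G. Then E_G(v_i) ≥ √(d_i) · √(d_i/(d_i + Δ − 1)). -/

import Mathlib

open Matrix Finset

open scoped MatrixOrder in
lemma psd_cs {m : ℕ} {M : Matrix (Fin m) (Fin m) ℝ} (hM : M.PosSemidef) (x y : Fin m → ℝ) :
    (x ⬝ᵥ M *ᵥ y) ^ 2 ≤ (x ⬝ᵥ M *ᵥ x) * (y ⬝ᵥ M *ᵥ y) := by
  obtain ⟨C, rfl⟩ := CStarAlgebra.nonneg_iff_eq_star_mul_self.mp hM.nonneg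
  have key : ∀ u v : Fin m → ℝ, u ⬝ᵥ (Cᴴ * C) *ᵥ v = (C *ᵥ u) ⬝ᵥ (C *ᵥ v) := by
    intro u v
    rw [← Matrix.mulVec_mulVec, Matrix.dotProduct_mulVec]
    have : Cᴴ = Cᵀ := by ext a b; simp [Matrix.conjTranspose_apply]
    rw [this, Matrix.vecMul_transpose]
  rw [← Matrix.star_eq_conjTranspose] at key
  rw [key, key, key]
  have := Finset.sum_mul_sq_le_sq_mul_sq Finset.univ (C *ᵥ x) (C *ᵥ y)
  simpa [dotProduct, sq] using this

lemma single_dp {m : ℕ} (M : Matrix (Fin m) (Fin m) ℝ) (i j : Fin m) :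
    (Pi.single i 1 : Fin m → ℝ) ⬝ᵥ M *ᵥ (Pi.single j 1) = M i j := by
  simp [dotProduct, Matrix.mulVec, Pi.single_apply]

lemma sym_dp {m : ℕ} {M : Matrix (Fin m) (Fin m) ℝ} (hs : Mᵀ = M) (u v : Fin m → ℝ) :
    (M *ᵥ u) ⬝ᵥ v = u ⬝ᵥ M *ᵥ v := by
  rw [← hs, Matrix.mulVec_transpose, ← Matrix.dotProduct_mulVec, hs]

lemma symm_of_psd {m : ℕ} {M : Matrix (Fin m) (Fin m) ℝ} (hM : M.PosSemidef) : Mᵀ = M := by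
  ext a b
  exact congrFun (congrFun hM.1.eq a) b

lemma entry_cs1 {m : ℕ} {M : Matrix (Fin m) (Fin m) ℝ} (hM : M.PosSemidef) (i : Fin m) :
    ((M * M) i i) ^ 2 ≤ M i i * ((M * M * M) i i) := by
  have hs : Mᵀ = M := symm_of_psd hM
  have h := psd_cs hM (Pi.single i 1) (M *ᵥ Pi.single i 1)
  simp only [Matrix.mulVec_mulVec, sym_dp hs, single_dp, ← Matrix.mul_assoc] at h
  exact h

lemma entry_cs2 {m : ℕ} {M : Matrix (Fin m) (Fin m) ℝ} (hM : M.PosSemidef) (i : Fin m) :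
    ((M * M * M) i i) ^ 2 ≤ ((M * M) i i) * ((M * M * M * M) i i) := by
  have hs : Mᵀ = M := symm_of_psd hM
  have hM2 : (M * M).PosSemidef := by
    have := hM.pow 2; rwa [pow_two] at this
  have h := psd_cs hM2 (Pi.single i 1) (M *ᵥ Pi.single i 1)
  simp only [Matrix.mulVec_mulVec, sym_dp hs, single_dp, ← Matrix.mul_assoc] at h
  exact h

lemma row_sum {n : ℕ} (G : SimpleGraph (Fin n)) [DecidableRel G.Adj] (k : Fin n) :
    ∑ j, G.adjMatrix ℝ k j = (G.degree k : ℝ) := by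
  simp [SimpleGraph.adjMatrix_apply, Finset.sum_boole, SimpleGraph.degree,
    SimpleGraph.neighborFinset_eq_filter]

lemma quad_bound {n : ℕ} (G : SimpleGraph (Fin n)) [DecidableRel G.Adj] (i : Fin n)
    (hquad : ¬ ∃ j k l : Fin n,
      G.Adj i j ∧ G.Adj j k ∧ G.Adj k l ∧ G.Adj l i ∧ k ≠ i ∧ l ≠ j) :
    (G.adjMatrix ℝ * G.adjMatrix ℝ * G.adjMatrix ℝ * G.adjMatrix ℝ) i i ≤
      (G.degree i : ℝ) * ((G.degree i : ℝ) + (G.maxDegree : ℝ) - 1) := by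
  set A := G.adjMatrix ℝ with hA
  have hAs : Aᵀ = A := SimpleGraph.transpose_adjMatrix G (α := ℝ)
  set S : Fin n → ℝ := fun j => (A * A) i j with hS
  have hSnn : ∀ j, 0 ≤ S j := by
    intro j
    rw [hS]
    simp only [Matrix.mul_apply]
    refine Finset.sum_nonneg fun k _ => ?_
    simp only [hA, SimpleGraph.adjMatrix_apply]
    positivity
  have hSi : S i = (G.degree i : ℝ) := by
    have := G.adjMatrix_mul_self_apply_self (α := ℝ) i
    simpa [hS, hA] using this
  have hSsym : ∀ j, (A * A) j i = S j := by
    intro j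
    have : (A * A)ᵀ = A * A := by rw [Matrix.transpose_mul, hAs]
    calc (A * A) j i = (A * A)ᵀ i j := rfl
    _ = (A * A) i j := by rw [this]
  have hE : (A * A * A * A) i i = ∑ j, S j ^ 2 := by
    have : A * A * A * A = (A * A) * (A * A) := by rw [Matrix.mul_assoc]
    rw [this, Matrix.mul_apply]
    refine Finset.sum_congr rfl fun j _ => ?_
    rw [hSsym j, sq]
  have hSle1 : ∀ j, j ≠ i → S j ≤ 1 := by
    intro j hji
    have hcard : (Finset.univ.filter fun k => G.Adj i k ∧ G.Adj k j).card ≤ 1 := by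
      refine Finset.card_le_one.mpr fun k₁ h₁ k₂ h₂ => ?_
      simp only [Finset.mem_filter] at h₁ h₂
      by_contra hne
      exact hquad ⟨k₁, j, k₂, h₁.2.1, h₁.2.2, h₂.2.2.symm, h₂.2.1.symm, hji, fun h => hne (h ▸ rfl)⟩
    have hSeq : S j = ((Finset.univ.filter fun k => G.Adj i k ∧ G.Adj k j).card : ℝ) := by
      simp only [hS, Matrix.mul_apply, hA, SimpleGraph.adjMatrix_apply]
      rw [Finset.card_filter]
      push_cast
      refine Finset.sum_congr rfl fun k _ => ?_
      by_cases h1 : G.Adj i k <;> by_cases h2 : G.Adj k j <;> simp [h1, h2]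
    rw [hSeq]
    exact_mod_cast hcard
  have hSsum : ∑ j, S j ≤ (G.degree i : ℝ) * (G.maxDegree : ℝ) := by
    have step1 : ∑ j, S j = ∑ k, A i k * (G.degree k : ℝ) := by
      simp only [hS, Matrix.mul_apply]
      rw [Finset.sum_comm]
      refine Finset.sum_congr rfl fun k _ => ?_
      rw [← Finset.mul_sum, row_sum]
    rw [step1]
    calc ∑ k, A i k * (G.degree k : ℝ) ≤ ∑ k, A i k * (G.maxDegree : ℝ) := by
          refine Finset.sum_le_sum fun k _ => ?_
          have hk : (G.degree k : ℝ) ≤ (G.maxDegree : ℝ) := by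
            exact_mod_cast G.degree_le_maxDegree k
          have : (0:ℝ) ≤ A i k := by
            simp only [hA, SimpleGraph.adjMatrix_apply]; positivity
          exact mul_le_mul_of_nonneg_left hk this
    _ = (G.degree i : ℝ) * (G.maxDegree : ℝ) := by
          rw [← Finset.sum_mul, row_sum]
  rw [hE]
  have split : ∑ j, S j ^ 2 = S i ^ 2 + ∑ j ∈ Finset.univ.erase i, S j ^ 2 := by
    exact (Finset.add_sum_erase _ (fun j => S j ^ 2) (Finset.mem_univ i)).symm
  have hsq : ∑ j ∈ Finset.univ.erase i, S j ^ 2 ≤ ∑ j ∈ Finset.univ.erase i, S j := by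
    refine Finset.sum_le_sum fun j hj => ?_
    have hj' := Finset.ne_of_mem_erase hj
    nlinarith [hSnn j, hSle1 j hj']
  have herase : ∑ j ∈ Finset.univ.erase i, S j = (∑ j, S j) - S i := by
    rw [eq_sub_iff_add_eq, Finset.sum_erase_add _ _ (Finset.mem_univ i)]
  rw [split]
  have : (∑ j ∈ Finset.univ.erase i, S j) ≤ (G.degree i : ℝ) * (G.maxDegree : ℝ) - (G.degree i : ℝ) := by
    rw [herase, hSi]; linarith
  nlinarith [hSi]


lemma alg_final {a c d D e4 : ℝ} (hd1 : 1 ≤ d) (hDd : d ≤ D) (h1 : d ^ 2 ≤ a * c)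
    (h2 : c ^ 2 ≤ d * e4) (he4 : e4 ≤ d * D) (ha0 : 0 ≤ a) :
    Real.sqrt d * Real.sqrt (d / D) ≤ a := by
  have hd0 : (0:ℝ) < d := by linarith
  have hDpos : (0:ℝ) < D := by linarith
  have hsD : 0 < Real.sqrt D := Real.sqrt_pos.mpr hDpos
  have hc0 : 0 < c := by nlinarith
  have h2' : c ^ 2 ≤ d * (d * D) := by nlinarith
  have hcD : c ≤ d * Real.sqrt D := by
    have hsq : (d * Real.sqrt D) ^ 2 = d * (d * D) := by
      rw [mul_pow, Real.sq_sqrt hDpos.le]; ring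
    have ht0 : 0 ≤ d * Real.sqrt D := mul_nonneg hd0.le (Real.sqrt_nonneg D)
    have : c ^ 2 ≤ (d * Real.sqrt D) ^ 2 := by rw [hsq]; exact h2'
    calc c = Real.sqrt (c ^ 2) := (Real.sqrt_sq hc0.le).symm
    _ ≤ Real.sqrt ((d * Real.sqrt D) ^ 2) := Real.sqrt_le_sqrt this
    _ = d * Real.sqrt D := Real.sqrt_sq ht0
  have hkey : d ≤ a * Real.sqrt D := by
    have : d ^ 2 ≤ a * (d * Real.sqrt D) := le_trans h1 (mul_le_mul_of_nonneg_left hcD ha0)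
    nlinarith
  have htarget : Real.sqrt d * Real.sqrt (d / D) = d / Real.sqrt D := by
    rw [← Real.sqrt_mul hd0.le]
    have : d * (d / D) = d ^ 2 / D := by ring
    rw [this, Real.sqrt_div (by positivity) D, Real.sqrt_sq hd0.le]
  rw [htarget, div_le_iff₀ hsD]
  exact hkey

/-- The energy of the vertex `i` of a finite simple graph `G`:
the `(i,i)` entry of `|A| = (A Aᴴ)^{1/2}`, where `A` is the adjacency matrix. -/
noncomputable def vertexEnergy {n : ℕ} (G : SimpleGraph (Fin n)) [DecidableRel G.Adj]
    (i : Fin n) : ℝ :=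
  ((Matrix.posSemidef_self_mul_conjTranspose (G.adjMatrix ℝ)).1.eigenvectorUnitary.1 *
    diagonal ((RCLike.ofReal : ℝ → ℝ) ∘ Real.sqrt ∘ (Matrix.posSemidef_self_mul_conjTranspose (G.adjMatrix ℝ)).1.eigenvalues) *
    (star (Matrix.posSemidef_self_mul_conjTranspose (G.adjMatrix ℝ)).1.eigenvectorUnitary : Matrix (Fin n) (Fin n) ℝ)) i i

open scoped MatrixOrder in
theorem stmt_7 {n : ℕ} (G : SimpleGraph (Fin n)) [DecidableRel G.Adj]
    (i : Fin n) (hd : 1 ≤ G.degree i)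
    (hquad : ¬ ∃ j k l : Fin n,
      G.Adj i j ∧ G.Adj j k ∧ G.Adj k l ∧ G.Adj l i ∧ k ≠ i ∧ l ≠ j) :
    Real.sqrt (G.degree i) *
      Real.sqrt ((G.degree i : ℝ) / ((G.degree i : ℝ) + (G.maxDegree : ℝ) - 1)) ≤
      vertexEnergy G i := by
  classical
  set A := G.adjMatrix ℝ with hA
  have hP := Matrix.posSemidef_self_mul_conjTranspose A
  set B : Matrix (Fin n) (Fin n) ℝ := hP.1.eigenvectorUnitary.1 *
    diagonal ((RCLike.ofReal : ℝ → ℝ) ∘ Real.sqrt ∘ hP.1.eigenvalues) *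
    (star hP.1.eigenvectorUnitary : Matrix (Fin n) (Fin n) ℝ) with hBdef
  have hBc : B = CFC.sqrt (A * Aᴴ) := by
    rw [CFC.sqrt_eq_real_sqrt _ hP.nonneg, cfcₙ_eq_cfc, hP.1.cfc_eq]; rfl
  have hB : B.PosSemidef := hBc ▸ (CFC.sqrt_nonneg (A * Aᴴ)).posSemidef
  have hAH : Aᴴ = A := by
    ext a b
    simp [Matrix.conjTranspose_apply, hA, SimpleGraph.adjMatrix_apply,
      SimpleGraph.adj_comm]
  have hBB : B * B = A * A := by
    rw [hBc, CFC.sqrt_mul_sqrt_self _ hP.nonneg, hAH]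
  have hBBii : (B * B) i i = (G.degree i : ℝ) := by
    rw [hBB]
    exact_mod_cast G.adjMatrix_mul_self_apply_self (α := ℝ) i
  have hB4 : (B * B * B * B) i i = (A * A * A * A) i i := by
    have h1 : B * B * B * B = (B * B) * (B * B) := by rw [Matrix.mul_assoc]
    have h2 : A * A * A * A = (A * A) * (A * A) := by rw [Matrix.mul_assoc]
    rw [h1, h2, hBB]
  have h1 : (G.degree i : ℝ) ^ 2 ≤ B i i * ((B * B * B) i i) := by
    have := entry_cs1 hB i
    rwa [hBBii] at this
  have h2 : ((B * B * B) i i) ^ 2 ≤ (G.degree i : ℝ) * ((A * A * A * A) i i) := by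
    have := entry_cs2 hB i
    rwa [hBBii, hB4] at this
  have he4 : (A * A * A * A) i i ≤
      (G.degree i : ℝ) * ((G.degree i : ℝ) + (G.maxDegree : ℝ) - 1) := quad_bound G i hquad
  have ha0 : 0 ≤ B i i := by
    have h := hB.dotProduct_mulVec_nonneg (Pi.single i 1)
    have hstar : star (Pi.single i 1 : Fin n → ℝ) = Pi.single i 1 := by
      ext k; simp [Pi.single_apply]
    rwa [hstar, single_dp] at h
  have hd1 : (1:ℝ) ≤ (G.degree i : ℝ) := by exact_mod_cast hd
  have hΔd : (G.degree i : ℝ) ≤ (G.maxDegree : ℝ) := by exact_mod_cast G.degree_le_maxDegree i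
  have hDd : (G.degree i : ℝ) ≤ (G.degree i : ℝ) + (G.maxDegree : ℝ) - 1 := by linarith
  exact alg_final hd1 hDd h1 h2 he4 ha0
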